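/- Let n ≥ 1, let L ∈ ℝ^{n×n} be symmetric positive semidefinite such that 2I − L is also positive semidefinite, and set Δ = L − I. Let M, B ≥ 0 be fixed, let (Π_m)_{m∈ℕ} be a sequence of matrices in ℝ^{n×n} and (ε_m)_{m∈ℕ} a sequence of nonnegative reals with ε_m → 0, such that for every m and every y ∈ ℝⁿ: ‖Δy − Π_mΔΠ_m y‖_L ≤ ε_m·M·‖y‖_L and ‖Π_mΔΠ_m y‖_L ≤ B·‖y‖_L. Then for every integer k ≥ 0 and every x ∈ ℝⁿ, ‖Δᵏx − (Π_mΔΠ_m)ᵏx‖_L → 0 as m → ∞. -/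

import Mathlib

open Matrix Filter

/-- The semi-norm induced by a positive semidefinite matrix `L`:
`‖x‖_L = √(xᵀ L x)`. -/
noncomputable def semiNormL {n : ℕ} (L : Matrix (Fin n) (Fin n) ℝ) (x : Fin n → ℝ) : ℝ :=
  Real.sqrt (x ⬝ᵥ (L *ᵥ x))

section SqrtPort

open scoped MatrixOrder

noncomputable def Matrix.PosSemidef.sqrt {n : ℕ} {L : Matrix (Fin n) (Fin n) ℝ}
    (_ : L.PosSemidef) : Matrix (Fin n) (Fin n) ℝ := CFC.sqrt L

theorem Matrix.PosSemidef.sqrt_mul_self {n : ℕ} {L : Matrix (Fin n) (Fin n) ℝ}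
    (hL : L.PosSemidef) : hL.sqrt * hL.sqrt = L :=
  CFC.sqrt_mul_sqrt_self L hL.nonneg

theorem Matrix.PosSemidef.posSemidef_sqrt {n : ℕ} {L : Matrix (Fin n) (Fin n) ℝ}
    (hL : L.PosSemidef) : hL.sqrt.PosSemidef :=
  (CFC.sqrt_nonneg L).posSemidef

end SqrtPort

lemma semiNormL_eq_norm {n : ℕ} (L : Matrix (Fin n) (Fin n) ℝ) (hL : L.PosSemidef)
    (x : Fin n → ℝ) :
    semiNormL L x = ‖(WithLp.equiv 2 (Fin n → ℝ)).symm (hL.sqrt *ᵥ x)‖ := by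
  have hs : hL.sqrt * hL.sqrt = L := hL.sqrt_mul_self
  have hH : hL.sqrt.conjTranspose = hL.sqrt := hL.posSemidef_sqrt.isHermitian
  have hT : hL.sqrt.transpose = hL.sqrt := by
    ext i j
    have := congrFun (congrFun hH i) j
    simpa [Matrix.conjTranspose_apply] using this
  rw [EuclideanSpace.norm_eq]
  unfold semiNormL
  congr 1
  have : L *ᵥ x = hL.sqrt *ᵥ (hL.sqrt *ᵥ x) := by rw [mulVec_mulVec, hs]
  rw [this]
  rw [show hL.sqrt *ᵥ (hL.sqrt *ᵥ x) = hL.sqrt *ᵥ (hL.sqrt *ᵥ x) from rfl]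
  rw [Matrix.dotProduct_mulVec]
  have hv : Matrix.vecMul x hL.sqrt = hL.sqrt *ᵥ x := by
    rw [← hT, Matrix.mulVec_transpose, hT]
  rw [hv]
  simp [dotProduct, Real.norm_eq_abs, sq_abs, pow_two]

lemma semiNormL_nonneg {n : ℕ} (L : Matrix (Fin n) (Fin n) ℝ) (x : Fin n → ℝ) :
    0 ≤ semiNormL L x := Real.sqrt_nonneg _

lemma semiNormL_add_le {n : ℕ} (L : Matrix (Fin n) (Fin n) ℝ) (hL : L.PosSemidef)
    (x y : Fin n → ℝ) :
    semiNormL L (x + y) ≤ semiNormL L x + semiNormL L y := by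
  rw [semiNormL_eq_norm L hL, semiNormL_eq_norm L hL, semiNormL_eq_norm L hL,
    Matrix.mulVec_add]
  have : (WithLp.equiv 2 (Fin n → ℝ)).symm (hL.sqrt *ᵥ x + hL.sqrt *ᵥ y)
      = (WithLp.equiv 2 (Fin n → ℝ)).symm (hL.sqrt *ᵥ x)
        + (WithLp.equiv 2 (Fin n → ℝ)).symm (hL.sqrt *ᵥ y) := rfl
  rw [this]
  exact norm_add_le _ _

theorem stmt_2 {n : ℕ} (hn : 1 ≤ n)
    (L : Matrix (Fin n) (Fin n) ℝ)
    (hL : L.PosSemidef)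
    (hL2 : ((2 : ℝ) • (1 : Matrix (Fin n) (Fin n) ℝ) - L).PosSemidef)
    (Δ : Matrix (Fin n) (Fin n) ℝ) (hΔ : Δ = L - 1)
    (M B : ℝ) (hM : 0 ≤ M) (hB : 0 ≤ B)
    (P : ℕ → Matrix (Fin n) (Fin n) ℝ)
    (ε : ℕ → ℝ) (hε : ∀ m, 0 ≤ ε m)
    (hεlim : Tendsto ε atTop (nhds 0))
    (h1 : ∀ m, ∀ y : Fin n → ℝ,
      semiNormL L (Δ *ᵥ y - (P m * Δ * P m) *ᵥ y) ≤ ε m * M * semiNormL L y)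
    (h2 : ∀ m, ∀ y : Fin n → ℝ,
      semiNormL L ((P m * Δ * P m) *ᵥ y) ≤ B * semiNormL L y) :
    ∀ k : ℕ, ∀ x : Fin n → ℝ,
      Tendsto (fun m => semiNormL L ((Δ ^ k) *ᵥ x - ((P m * Δ * P m) ^ k) *ᵥ x))
        atTop (nhds 0) := by
  -- Δ is symmetric
  have hLH : Lᴴ = L := hL.isHermitian
  have hΔT : Δᵀ = Δ := by
    have hLT : Lᵀ = L := by
      ext i j
      have := congrFun (congrFun hLH i) j
      simpa [Matrix.conjTranspose_apply] using this
    rw [hΔ, Matrix.transpose_sub, hLT, Matrix.transpose_one]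
  -- the key contraction property: ‖Δ y‖_L ≤ ‖y‖_L
  have hcontr : ∀ y : Fin n → ℝ, semiNormL L (Δ *ᵥ y) ≤ semiNormL L y := by
    intro y
    unfold semiNormL
    apply Real.sqrt_le_sqrt
    have hQident : L - Δ * L * Δ = Lᴴ * (((2 : ℝ) • (1 : Matrix (Fin n) (Fin n) ℝ)) - L) * L := by
      rw [hLH, hΔ]
      rw [show ((2 : ℝ) • (1 : Matrix (Fin n) (Fin n) ℝ)) = 1 + 1 from by
        rw [two_smul]]
      noncomm_ring
    have hQ : (L - Δ * L * Δ).PosSemidef := by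
      rw [hQident]
      exact hL2.conjTranspose_mul_mul_same L
    have hq := hQ.dotProduct_mulVec_nonneg y
    simp only [star_trivial] at hq
    have hrw : (Δ *ᵥ y) ⬝ᵥ (L *ᵥ (Δ *ᵥ y)) = y ⬝ᵥ ((Δ * L * Δ) *ᵥ y) := by
      rw [mulVec_mulVec]
      have h1' : Δ *ᵥ y = Matrix.vecMul y Δ := by
        rw [← hΔT, Matrix.mulVec_transpose, hΔT]
      rw [h1', ← Matrix.dotProduct_mulVec, mulVec_mulVec, ← Matrix.mul_assoc]
    have hsub : y ⬝ᵥ ((L - Δ * L * Δ) *ᵥ y)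
        = y ⬝ᵥ (L *ᵥ y) - y ⬝ᵥ ((Δ * L * Δ) *ᵥ y) := by
      rw [Matrix.sub_mulVec, dotProduct_sub]
    rw [hrw]
    rw [hsub] at hq
    linarith
  -- bound on powers of the coarse operator
  have hpow : ∀ (k : ℕ) (m : ℕ) (x : Fin n → ℝ),
      semiNormL L (((P m * Δ * P m) ^ k) *ᵥ x) ≤ B ^ k * semiNormL L x := by
    intro k
    induction k with
    | zero => intro m x; simp [Matrix.one_mulVec]
    | succ k ih =>
      intro m x
      rw [pow_succ', ← mulVec_mulVec]
      calc semiNormL L ((P m * Δ * P m) *ᵥ (((P m * Δ * P m) ^ k) *ᵥ x))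
          ≤ B * semiNormL L (((P m * Δ * P m) ^ k) *ᵥ x) := h2 m _
        _ ≤ B * (B ^ k * semiNormL L x) :=
            mul_le_mul_of_nonneg_left (ih m x) hB
        _ = B ^ (k + 1) * semiNormL L x := by ring
  intro k
  induction k with
  | zero =>
    intro x
    simp only [pow_zero, Matrix.one_mulVec, sub_self]
    have : semiNormL L (0 : Fin n → ℝ) = 0 := by
      simp [semiNormL]
    simp only [this]
    exact tendsto_const_nhds
  | succ k ih =>
    intro x
    have hupper : Tendsto
        (fun m => semiNormL L ((Δ ^ k) *ᵥ x - ((P m * Δ * P m) ^ k) *ᵥ x)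
          + ε m * (M * (B ^ k * semiNormL L x))) atTop (nhds 0) := by
      have := (ih x).add (hεlim.mul_const (M * (B ^ k * semiNormL L x)))
      simpa using this
    apply tendsto_of_tendsto_of_tendsto_of_le_of_le tendsto_const_nhds hupper
    · intro m; exact semiNormL_nonneg L _
    · intro m
      have hident : (Δ ^ (k + 1)) *ᵥ x - ((P m * Δ * P m) ^ (k + 1)) *ᵥ x
          = Δ *ᵥ ((Δ ^ k) *ᵥ x - ((P m * Δ * P m) ^ k) *ᵥ x)
            + (Δ *ᵥ (((P m * Δ * P m) ^ k) *ᵥ x)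
              - (P m * Δ * P m) *ᵥ (((P m * Δ * P m) ^ k) *ᵥ x)) := by
        rw [pow_succ', pow_succ', ← mulVec_mulVec, ← mulVec_mulVec, Matrix.mulVec_sub]
        abel
      dsimp only
      rw [hident]
      calc semiNormL L (Δ *ᵥ ((Δ ^ k) *ᵥ x - ((P m * Δ * P m) ^ k) *ᵥ x)
              + (Δ *ᵥ (((P m * Δ * P m) ^ k) *ᵥ x)
                - (P m * Δ * P m) *ᵥ (((P m * Δ * P m) ^ k) *ᵥ x)))
          ≤ semiNormL L (Δ *ᵥ ((Δ ^ k) *ᵥ x - ((P m * Δ * P m) ^ k) *ᵥ x))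
            + semiNormL L (Δ *ᵥ (((P m * Δ * P m) ^ k) *ᵥ x)
              - (P m * Δ * P m) *ᵥ (((P m * Δ * P m) ^ k) *ᵥ x)) :=
            semiNormL_add_le L hL _ _
        _ ≤ semiNormL L ((Δ ^ k) *ᵥ x - ((P m * Δ * P m) ^ k) *ᵥ x)
            + ε m * M * semiNormL L (((P m * Δ * P m) ^ k) *ᵥ x) :=
            add_le_add (hcontr _) (h1 m _)
        _ ≤ semiNormL L ((Δ ^ k) *ᵥ x - ((P m * Δ * P m) ^ k) *ᵥ x)
            + ε m * M * (B ^ k * semiNormL L x) := by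
            have := hpow k m x
            nlinarith [mul_nonneg (hε m) hM]
        _ = semiNormL L ((Δ ^ k) *ᵥ x - ((P m * Δ * P m) ^ k) *ᵥ x)
            + ε m * (M * (B ^ k * semiNormL L x)) := by ring
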